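/- Let F : ℝⁿ × ℝᵐ → ℝ be twice continuously differentiable with nonempty saddle set Saddle(F), such that the mixed second-derivative map (x,z) ↦ ∇ₓ_z F(x,z) is locally Lipschitz, and assume F is locally jointly strongly quasiconvex-quasiconcave at every point of Saddle(F). Then every isolated path connected component of Saddle(F) is locally asymptotically stable under the saddle-point dynamics ẋ = -∇ₓF(x,z), ż = ∇_zF(x,z), and every trajectory starting sufficiently close converges to a single point of that component. -/

import Mathlib

open Metric Filter Topology Set

noncomputable section

/-- Euclidean space `ℝⁿ`. -/
abbrev En (n : ℕ) : Type := EuclideanSpace ℝ (Fin n)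

variable {n m : ℕ}

/-- Partial gradient of `F` in the first (x) variable. -/
def gradX (F : En n × En m → ℝ) (p : En n × En m) : En n :=
  gradient (fun x => F (x, p.2)) p.1

/-- Partial gradient of `F` in the second (z) variable. -/
def gradZ (F : En n × En m → ℝ) (p : En n × En m) : En m :=
  gradient (fun z => F (p.1, z)) p.2

/-- The saddle-point vector field `X_sp = (-∇ₓF, ∇_zF)`. -/
def Xsp (F : En n × En m → ℝ) (p : En n × En m) : En n × En m :=
  (-gradX F p, gradZ F p)

/-- A trajectory of the saddle-point dynamics, defined on `[0,∞)`. -/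
def IsTrajectory (F : En n × En m → ℝ) (φ : ℝ → En n × En m) : Prop :=
  ∀ t : ℝ, 0 ≤ t → HasDerivAt φ (Xsp F (φ t)) t

/-- `p` is a (local min-max) saddle point of `F`. -/
def IsSaddlePoint (F : En n × En m → ℝ) (p : En n × En m) : Prop :=
  ∃ U : Set (En n), ∃ W : Set (En m),
    IsOpen U ∧ IsOpen W ∧ p.1 ∈ U ∧ p.2 ∈ W ∧
    ∀ x ∈ U, ∀ z ∈ W, F (p.1, z) ≤ F p ∧ F p ≤ F (x, p.2)

/-- The set of saddle points of `F`. -/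
def SaddleSet (F : En n × En m → ℝ) : Set (En n × En m) :=
  {p | IsSaddlePoint F p}

/-- A point `p` is stable for the saddle-point dynamics of `F`. -/
def StablePt (F : En n × En m → ℝ) (p : En n × En m) : Prop :=
  ∀ ε > 0, ∃ δ > 0, ∀ φ : ℝ → En n × En m, IsTrajectory F φ →
    dist (φ 0) p < δ → ∀ t : ℝ, 0 ≤ t → dist (φ t) p < ε

/-- `S` is an isolated path connected component of `T`. -/
def IsIsolatedPathComponent (S T : Set (En n × En m)) : Prop :=
  S ⊆ T ∧ (∀ a ∈ S, ∀ b ∈ S, JoinedIn S a b) ∧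
    ∃ U : Set (En n × En m), IsOpen U ∧ S ⊆ U ∧ U ∩ T = S

/-- `F` is locally convex-concave at `p`. -/
def LocallyConvexConcaveAt (F : En n × En m → ℝ) (p : En n × En m) : Prop :=
  ∃ U : Set (En n × En m), IsOpen U ∧ p ∈ U ∧
    ∀ q ∈ U, ConvexOn ℝ {x : En n | (x, q.2) ∈ U} (fun x => F (x, q.2)) ∧
      ConcaveOn ℝ {z : En m | (q.1, z) ∈ U} (fun z => F (q.1, z))

/-- `F` is locally strictly convex-concave at `p`. -/
def LocallyStrictlyConvexConcaveAt (F : En n × En m → ℝ) (p : En n × En m) : Prop :=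
  LocallyConvexConcaveAt F p ∧
    ((∃ r > 0, StrictConvexOn ℝ (ball p.1 r) (fun x => F (x, p.2))) ∨
      (∃ r > 0, StrictConcaveOn ℝ (ball p.2 r) (fun z => F (p.1, z))))

/-- A function `f` is strongly quasiconvex with parameter `s > 0` on a convex set `D`. -/
def StronglyQuasiconvexOn {X : Type*} [NormedAddCommGroup X] [NormedSpace ℝ X]
    (s : ℝ) (D : Set X) (f : X → ℝ) : Prop :=
  Convex ℝ D ∧ ∀ x ∈ D, ∀ y ∈ D, ∀ lam ∈ Icc (0 : ℝ) 1,
    s * lam * (1 - lam) * ‖x - y‖ ^ 2 ≤ max (f x) (f y) - f (lam • x + (1 - lam) • y)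

/-- `F` is locally jointly strongly quasiconvex-quasiconcave at `p`. -/
def LocallyJointlyStronglyQcQcAt (F : En n × En m → ℝ) (p : En n × En m) : Prop :=
  ∃ s > (0 : ℝ), ∃ U : Set (En n × En m), IsOpen U ∧ p ∈ U ∧
    ∀ q ∈ U, StronglyQuasiconvexOn s {x : En n | (x, q.2) ∈ U} (fun x => F (x, q.2)) ∧
      StronglyQuasiconvexOn s {z : En m | (q.1, z) ∈ U} (fun z => -F (q.1, z))

/-- The mixed second derivative map `(x,z) ↦ ∇ₓ_z F (x,z)`. -/
def mixedXZ (F : En n × En m → ℝ) (p : En n × En m) : En m →L[ℝ] En n :=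
  fderiv ℝ (fun z => gradX F (p.1, z)) p.2

section Lemmas

open RealInnerProductSpace

variable {k : ℕ}

/-- Strong quasiconvexity gives a gradient inequality at points whose value dominates. -/
lemma sqc_gradient {s : ℝ} {D : Set (En k)} {f : En k → ℝ}
    (hf : StronglyQuasiconvexOn s D f) {x y g : En k} (hx : x ∈ D) (hy : y ∈ D)
    (hfy : f y ≤ f x) (hg : HasGradientAt f g x) :
    s * ‖x - y‖ ^ 2 ≤ ⟪g, x - y⟫ := by
  rcases eq_or_ne x y with rfl | hxy
  · simp
  · set c : ℝ := ‖x - y‖ ^ 2 with hc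
    have hcpos : 0 < c := by
      rw [hc]
      exact pow_pos (norm_pos_iff.mpr (sub_ne_zero.mpr hxy)) 2
    set φ : ℝ → ℝ := fun lam => f (x + lam • (y - x)) with hφ
    have hline : HasDerivAt (fun lam : ℝ => x + lam • (y - x)) (y - x) 0 := by
      simpa using ((hasDerivAt_id (0:ℝ)).smul_const (y - x)).const_add x
    have hg' : HasFDerivAt f ((InnerProductSpace.toDual ℝ (En k)) g) (x + (0:ℝ) • (y - x)) := by
      simpa using hg.hasFDerivAt
    have hder : HasDerivAt φ ⟪g, y - x⟫ 0 := by
      have := hg'.comp_hasDerivAt 0 hline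
      simpa [hφ, InnerProductSpace.toDual_apply_apply, Function.comp_def] using this
    have hub : ∀ lam : ℝ, lam ∈ Set.Ioc (0:ℝ) 1 → φ lam - φ 0 ≤ -(s * lam * (1 - lam) * c) := by
      intro lam hlam
      have h1 : (1 - lam) ∈ Set.Icc (0:ℝ) 1 := ⟨by linarith [hlam.2], by linarith [hlam.1]⟩
      have h2 := hf.2 x hx y hy (1 - lam) h1
      have hpt : (1 - lam) • x + (1 - (1 - lam)) • y = x + lam • (y - x) := by
        simp only [sub_sub_cancel, smul_sub, sub_smul, one_smul]
        abel
      rw [hpt, max_eq_left hfy] at h2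
      have h0 : φ 0 = f x := by simp [hφ]
      rw [h0]
      show f (x + lam • (y - x)) - f x ≤ -(s * lam * (1 - lam) * c)
      rw [hc]
      ring_nf
      ring_nf at h2
      linarith
    have hslope : Tendsto (fun lam : ℝ => (φ lam - φ 0) / lam) (𝓝[>] (0:ℝ))
        (𝓝 ⟪g, y - x⟫) := by
      have h1 := hasDerivAt_iff_tendsto_slope.mp hder
      have h2 : 𝓝[>] (0:ℝ) ≤ 𝓝[≠] (0:ℝ) :=
        nhdsWithin_mono _ (fun a ha => ne_of_gt ha)
      have h3 := h1.mono_left h2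
      simpa [slope_fun_def_field, sub_zero] using h3
    have hlim2 : Tendsto (fun lam : ℝ => -(s * (1 - lam) * c)) (𝓝[>] (0:ℝ))
        (𝓝 (-(s * c))) := by
      have h1 : Tendsto (fun lam : ℝ => -(s * (1 - lam) * c)) (𝓝 0) (𝓝 (-(s * c))) := by
        refine Continuous.tendsto' (by fun_prop) _ _ (by norm_num)
      exact h1.mono_left nhdsWithin_le_nhds
    have hle : ⟪g, y - x⟫ ≤ -(s * c) := by
      refine le_of_tendsto_of_tendsto hslope hlim2 ?_
      filter_upwards [Ioc_mem_nhdsGT_of_mem (by constructor <;> norm_num : (0:ℝ) ∈ Set.Ico 0 1)]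
        with lam hlam
      have hlampos : 0 < lam := hlam.1
      have h4 := hub lam hlam
      rw [div_le_iff₀ hlampos]
      calc φ lam - φ 0 ≤ -(s * lam * (1 - lam) * c) := h4
        _ = -(s * (1 - lam) * c) * lam := by ring
    have hinner : ⟪g, x - y⟫ = -⟪g, y - x⟫ := by
      rw [show x - y = -(y - x) by abel, inner_neg_right]
    rw [hinner]
    linarith [hle]

/-- For a strongly quasiconvex function, a local minimizer is a global minimizer on `D`. -/
lemma sqc_localmin_globalmin {s : ℝ} (hs : 0 < s) {D : Set (En k)} {f : En k → ℝ}
    (hf : StronglyQuasiconvexOn s D f) {x : En k} (hx : x ∈ D)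
    (hloc : ∀ᶠ y in 𝓝 x, f x ≤ f y) : ∀ y ∈ D, f x ≤ f y := by
  intro y hy
  by_contra hlt
  push_neg at hlt
  have hxy : x ≠ y := by rintro rfl; exact absurd le_rfl (not_le.mpr hlt)
  have hcpos : 0 < ‖x - y‖ ^ 2 := pow_pos (norm_pos_iff.mpr (sub_ne_zero.mpr hxy)) 2
  have hcont : Tendsto (fun lam : ℝ => x + lam • (y - x)) (𝓝 0) (𝓝 x) := by
    refine Continuous.tendsto' (by fun_prop) _ _ (by simp)
  have hev : ∀ᶠ lam : ℝ in 𝓝 0, f x ≤ f (x + lam • (y - x)) := hcont.eventually hloc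
  have hev2 : ∀ᶠ lam : ℝ in 𝓝[>] (0:ℝ), f x ≤ f (x + lam • (y - x)) :=
    hev.filter_mono nhdsWithin_le_nhds
  have hev3 : Set.Ioo (0:ℝ) 1 ∈ 𝓝[>] (0:ℝ) := Ioo_mem_nhdsGT_of_mem (by norm_num)
  obtain ⟨lam, hlam1, hlam2⟩ := (hev2.and (eventually_mem_set.mpr hev3)).exists
  have h1 : (1 - lam) ∈ Set.Icc (0:ℝ) 1 := ⟨by linarith [hlam2.2], by linarith [hlam2.1]⟩
  have h2 := hf.2 x hx y hy (1 - lam) h1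
  have hpt : (1 - lam) • x + (1 - (1 - lam)) • y = x + lam • (y - x) := by
    simp only [sub_sub_cancel, smul_sub, sub_smul, one_smul]
    abel
  rw [hpt, max_eq_left hlt.le] at h2
  nlinarith [hlam2.1, hlam2.2, mul_pos (mul_pos (mul_pos hs hlam2.1) (by linarith [hlam2.2] : (0:ℝ) < 1 - lam)) hcpos]

/-- A strongly quasiconvex function has at most one global minimizer on `D`. -/
lemma sqc_min_unique {s : ℝ} (hs : 0 < s) {D : Set (En k)} {f : En k → ℝ}
    (hf : StronglyQuasiconvexOn s D f) {x y : En k} (hx : x ∈ D) (hy : y ∈ D)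
    (hmin : ∀ z ∈ D, f x ≤ f z) (hxy : f y ≤ f x) : x = y := by
  have h2 := hf.2 x hx y hy (1/2) ⟨by norm_num, by norm_num⟩
  have hmid : (1/2 : ℝ) • x + (1 - 1/2 : ℝ) • y ∈ D :=
    hf.1 hx hy (by norm_num) (by norm_num) (by norm_num)
  have h3 := hmin _ hmid
  rw [max_eq_left hxy] at h2
  have h4 : ‖x - y‖ ^ 2 ≤ 0 := by nlinarith
  have h5 : ‖x - y‖ ^ 2 = 0 := le_antisymm h4 (by positivity)
  have := pow_eq_zero_iff (n := 2) (by norm_num) |>.mp h5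
  have := norm_eq_zero.mp this
  have := sub_eq_zero.mp this
  exact this

/-- Saddle points of a locally jointly strongly quasiconvex-quasiconcave function are isolated. -/
lemma saddle_isolated (F : En n × En m → ℝ) (p : En n × En m)
    (hp : IsSaddlePoint F p) (hq : LocallyJointlyStronglyQcQcAt F p) :
    ∃ ε > 0, ∀ q : En n × En m, IsSaddlePoint F q → dist q p < ε → q = p := by
  obtain ⟨s, hs, U, hUopen, hpU, hU⟩ := hq
  obtain ⟨ε, hε, hball⟩ := Metric.isOpen_iff.mp hUopen p hpU
  refine ⟨ε, hε, ?_⟩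
  -- general facts about saddle points in U
  have keyA : ∀ r : En n × En m, IsSaddlePoint F r → r ∈ U →
      ∀ y : En n, (y, r.2) ∈ U → F r ≤ F (y, r.2) := by
    intro r hr hrU y hyU
    obtain ⟨Ur, Wr, hUr, hWr, hr1, hr2, hprop⟩ := hr
    have hsqc := (hU r hrU).1
    have hloc : ∀ᶠ x in 𝓝 r.1, F (r.1, r.2) ≤ F (x, r.2) := by
      filter_upwards [hUr.eventually_mem hr1] with x hx
      exact (hprop x hx r.2 hr2).2
    have hr1mem : r.1 ∈ {x : En n | (x, r.2) ∈ U} := by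
      simpa only [Set.mem_setOf_eq, Prod.mk.eta] using hrU
    have := sqc_localmin_globalmin hs hsqc hr1mem
      (by simpa only [Prod.mk.eta] using hloc) y hyU
    simpa only [Prod.mk.eta] using this
  have keyB : ∀ r : En n × En m, IsSaddlePoint F r → r ∈ U →
      ∀ z : En m, (r.1, z) ∈ U → F (r.1, z) ≤ F r := by
    intro r hr hrU z hzU
    obtain ⟨Ur, Wr, hUr, hWr, hr1, hr2, hprop⟩ := hr
    have hsqc := (hU r hrU).2
    have hloc : ∀ᶠ w in 𝓝 r.2, -F (r.1, r.2) ≤ -F (r.1, w) := by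
      filter_upwards [hWr.eventually_mem hr2] with w hw
      exact neg_le_neg (hprop r.1 hr1 w hw).1
    have hr2mem : r.2 ∈ {z : En m | (r.1, z) ∈ U} := by
      simpa only [Set.mem_setOf_eq, Prod.mk.eta] using hrU
    have := sqc_localmin_globalmin hs hsqc hr2mem
      (by simpa only [Prod.mk.eta] using hloc) z hzU
    have := neg_le_neg this
    simpa only [Prod.mk.eta, neg_neg] using this
  intro q hqsad hqdist
  have hqU : q ∈ U := hball (by simpa [Metric.mem_ball] using hqdist)
  have hd1 : dist q.1 p.1 < ε := lt_of_le_of_lt (le_max_left _ _) (by rwa [Prod.dist_eq] at hqdist)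
  have hd2 : dist q.2 p.2 < ε := lt_of_le_of_lt (le_max_right _ _) (by rwa [Prod.dist_eq] at hqdist)
  have hmem1 : ((p.1, q.2) : En n × En m) ∈ U := by
    apply hball
    rw [Metric.mem_ball, Prod.dist_eq]
    simp [hε, hd2]
  have hmem2 : ((q.1, p.2) : En n × En m) ∈ U := by
    apply hball
    rw [Metric.mem_ball, Prod.dist_eq]
    simp [hd1, hε]
  have e1 : F q ≤ F (p.1, q.2) := keyA q hqsad hqU p.1 hmem1
  have e2 : F (p.1, q.2) ≤ F p := keyB p hp hpU q.2 hmem1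
  have e3 : F p ≤ F (q.1, p.2) := keyA p hp hpU q.1 hmem2
  have e4 : F (q.1, p.2) ≤ F q := keyB q hqsad hqU p.2 hmem2
  have hFqp : F q = F p := le_antisymm (e1.trans e2) (e3.trans e4)
  have hEq1 : F (p.1, q.2) = F q := by
    have := e1
    have := e2
    linarith
  -- x components agree
  have hx : q.1 = p.1 := by
    have hsqc := (hU q hqU).1
    have hq1mem : q.1 ∈ {x : En n | (x, q.2) ∈ U} := by
      simpa only [Set.mem_setOf_eq, Prod.mk.eta] using hqU
    have hp1mem : p.1 ∈ {x : En n | (x, q.2) ∈ U} := hmem1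
    refine sqc_min_unique hs hsqc hq1mem hp1mem ?_ ?_
    · intro z hz
      have := keyA q hqsad hqU z hz
      simpa only [Prod.mk.eta] using this
    · show F (p.1, q.2) ≤ F (q.1, q.2)
      rw [hEq1, Prod.mk.eta]
  have hz : q.2 = p.2 := by
    have hsqc := (hU q hqU).2
    have hq2mem : q.2 ∈ {z : En m | (q.1, z) ∈ U} := by
      simpa only [Set.mem_setOf_eq, Prod.mk.eta] using hqU
    have hp2mem : p.2 ∈ {z : En m | (q.1, z) ∈ U} := hmem2
    have hEq2 : F (q.1, p.2) = F q := le_antisymm e4 (by rw [hFqp]; exact e3)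
    refine sqc_min_unique hs hsqc hq2mem hp2mem ?_ ?_
    · intro z hz
      have := keyB q hqsad hqU z hz
      simpa only [Prod.mk.eta] using neg_le_neg this
    · show -F (q.1, p.2) ≤ -F (q.1, q.2)
      rw [hEq2, Prod.mk.eta]
  exact Prod.ext hx hz

/-- A path connected subset of the saddle set is a singleton. -/
lemma pathConnected_saddle_singleton (F : En n × En m → ℝ)
    (hqcqc : ∀ p ∈ SaddleSet F, LocallyJointlyStronglyQcQcAt F p)
    (S : Set (En n × En m)) (hSne : S.Nonempty) (hsub : S ⊆ SaddleSet F)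
    (hjoin : ∀ a ∈ S, ∀ b ∈ S, JoinedIn S a b) :
    ∃ p, p ∈ SaddleSet F ∧ S = {p} := by
  obtain ⟨p, hpS⟩ := hSne
  have hpsad : p ∈ SaddleSet F := hsub hpS
  obtain ⟨ε, hε, hiso⟩ := saddle_isolated F p hpsad (hqcqc p hpsad)
  refine ⟨p, hpsad, ?_⟩
  have hpath : IsPathConnected S := ⟨p, hpS, fun _ hy => hjoin p hpS _ hy⟩
  have hpre : IsPreconnected S := hpath.isConnected.isPreconnected
  refine Set.eq_singleton_iff_unique_mem.mpr ⟨hpS, ?_⟩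
  intro q hqS
  by_contra hqp
  obtain ⟨r, hrS, hru, hrv⟩ := hpre (ball p ε) ({p}ᶜ) isOpen_ball
    isOpen_compl_singleton
    (fun a haS => by
      rcases eq_or_ne a p with rfl | hne
      · exact Or.inl (mem_ball_self hε)
      · exact Or.inr hne)
    ⟨p, hpS, mem_ball_self hε⟩ ⟨q, hqS, hqp⟩
  exact hrv (by simp [hiso r (hsub hrS) (by simpa [Metric.mem_ball] using hru)])

section Plumbing

open ContinuousLinearMap InnerProductSpace RealInnerProductSpace

/-- The continuous linear map sending a functional on the product to the `x`-part gradient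
vector. -/
def dualX (n m : ℕ) : ((En n × En m) →L[ℝ] ℝ) →L[ℝ] En n :=
  LinearMap.mkContinuous
    { toFun := fun ψ => (toDual ℝ (En n)).symm (ψ.comp (inl ℝ (En n) (En m)))
      map_add' := fun a b => by
        simp [ContinuousLinearMap.add_comp]
      map_smul' := fun r ψ => by
        simp [ContinuousLinearMap.smul_comp, LinearIsometryEquiv.map_smulₛₗ] }
    1
    (fun ψ => by
      simp only [LinearMap.coe_mk, AddHom.coe_mk]
      rw [LinearIsometryEquiv.norm_map, one_mul]
      refine le_trans (ContinuousLinearMap.opNorm_comp_le _ _) ?_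
      have h1 : ‖inl ℝ (En n) (En m)‖ ≤ 1 :=
        ContinuousLinearMap.opNorm_le_bound _ zero_le_one
          (fun x => by simp [Prod.norm_def])
      calc ‖ψ‖ * ‖inl ℝ (En n) (En m)‖ ≤ ‖ψ‖ * 1 := by gcongr
        _ = ‖ψ‖ := mul_one _)

@[simp] lemma dualX_apply (ψ : (En n × En m) →L[ℝ] ℝ) :
    dualX n m ψ = (toDual ℝ (En n)).symm (ψ.comp (inl ℝ (En n) (En m))) := rfl

/-- Same for the `z`-part. -/
def dualZ (n m : ℕ) : ((En n × En m) →L[ℝ] ℝ) →L[ℝ] En m :=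
  LinearMap.mkContinuous
    { toFun := fun ψ => (toDual ℝ (En m)).symm (ψ.comp (inr ℝ (En n) (En m)))
      map_add' := fun a b => by
        simp [ContinuousLinearMap.add_comp]
      map_smul' := fun r ψ => by
        simp [ContinuousLinearMap.smul_comp, LinearIsometryEquiv.map_smulₛₗ] }
    1
    (fun ψ => by
      simp only [LinearMap.coe_mk, AddHom.coe_mk]
      rw [LinearIsometryEquiv.norm_map, one_mul]
      refine le_trans (ContinuousLinearMap.opNorm_comp_le _ _) ?_
      have h1 : ‖inr ℝ (En n) (En m)‖ ≤ 1 :=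
        ContinuousLinearMap.opNorm_le_bound _ zero_le_one
          (fun x => by simp [Prod.norm_def])
      calc ‖ψ‖ * ‖inr ℝ (En n) (En m)‖ ≤ ‖ψ‖ * 1 := by gcongr
        _ = ‖ψ‖ := mul_one _)

@[simp] lemma dualZ_apply (ψ : (En n × En m) →L[ℝ] ℝ) :
    dualZ n m ψ = (toDual ℝ (En m)).symm (ψ.comp (inr ℝ (En n) (En m))) := rfl

lemma inner_dualX (ψ : (En n × En m) →L[ℝ] ℝ) (v : En n) :
    ⟪dualX n m ψ, v⟫ = ψ (v, 0) := by
  rw [dualX_apply, toDual_symm_apply]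
  rfl

lemma inner_dualZ (ψ : (En n × En m) →L[ℝ] ℝ) (w : En m) :
    ⟪dualZ n m ψ, w⟫ = ψ (0, w) := by
  rw [dualZ_apply, toDual_symm_apply]
  rfl

lemma gradX_eq (F : En n × En m → ℝ) (hFd : Differentiable ℝ F) (q : En n × En m) :
    gradX F q = dualX n m (fderiv ℝ F q) := by
  have h0 : HasFDerivAt F (fderiv ℝ F q) (q.1, q.2) := by
    rw [Prod.mk.eta]; exact (hFd q).hasFDerivAt
  have h1 : HasFDerivAt (fun x : En n => F (x, q.2))
      ((fderiv ℝ F q).comp (inl ℝ (En n) (En m))) q.1 :=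
    h0.comp q.1 (hasFDerivAt_prodMk_left q.1 q.2)
  show (toDual ℝ (En n)).symm (fderiv ℝ (fun x : En n => F (x, q.2)) q.1) = _
  rw [h1.fderiv]
  rfl

lemma gradZ_eq (F : En n × En m → ℝ) (hFd : Differentiable ℝ F) (q : En n × En m) :
    gradZ F q = dualZ n m (fderiv ℝ F q) := by
  have h0 : HasFDerivAt F (fderiv ℝ F q) (q.1, q.2) := by
    rw [Prod.mk.eta]; exact (hFd q).hasFDerivAt
  have h1 : HasFDerivAt (fun z : En m => F (q.1, z))
      ((fderiv ℝ F q).comp (inr ℝ (En n) (En m))) q.2 :=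
    h0.comp q.2 (hasFDerivAt_prodMk_right q.1 q.2)
  show (toDual ℝ (En m)).symm (fderiv ℝ (fun z : En m => F (q.1, z)) q.2) = _
  rw [h1.fderiv]
  rfl

variable {F : En n × En m → ℝ}

lemma diff_fderiv (hF : ContDiff ℝ 2 F) : Differentiable ℝ (fderiv ℝ F) :=
  (hF.fderiv_right (m := 1) (by norm_num)).differentiable (by norm_num)

lemma hasFDerivAt_gradX_snd (hF : ContDiff ℝ 2 F) (x : En n) (z : En m) :
    HasFDerivAt (fun ζ : En m => gradX F (x, ζ))
      ((dualX n m).comp ((fderiv ℝ (fderiv ℝ F) (x, z)).comp (inr ℝ (En n) (En m)))) z := by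
  have hFd := hF.differentiable (by norm_num)
  have hΦ := diff_fderiv hF
  have h1 : HasFDerivAt (fun ζ : En m => (x, ζ)) (inr ℝ (En n) (En m)) z :=
    hasFDerivAt_prodMk_right x z
  have h2 : HasFDerivAt (fderiv ℝ F) (fderiv ℝ (fderiv ℝ F) (x, z)) (x, z) :=
    (hΦ _).hasFDerivAt
  have h3 := h2.comp z h1
  have h4 := (dualX n m).hasFDerivAt.comp z h3
  have heq : (fun ζ : En m => gradX F (x, ζ)) =
      fun ζ : En m => dualX n m (fderiv ℝ F (x, ζ)) :=
    funext fun ζ => gradX_eq F hFd (x, ζ)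
  rw [heq]
  exact h4

lemma hasFDerivAt_gradZ_fst (hF : ContDiff ℝ 2 F) (x : En n) (z : En m) :
    HasFDerivAt (fun ξ : En n => gradZ F (ξ, z))
      ((dualZ n m).comp ((fderiv ℝ (fderiv ℝ F) (x, z)).comp (inl ℝ (En n) (En m)))) x := by
  have hFd := hF.differentiable (by norm_num)
  have hΦ := diff_fderiv hF
  have h1 : HasFDerivAt (fun ξ : En n => (ξ, z)) (inl ℝ (En n) (En m)) x :=
    hasFDerivAt_prodMk_left x z
  have h2 : HasFDerivAt (fderiv ℝ F) (fderiv ℝ (fderiv ℝ F) (x, z)) (x, z) :=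
    (hΦ _).hasFDerivAt
  have h3 := h2.comp x h1
  have h4 := (dualZ n m).hasFDerivAt.comp x h3
  have heq : (fun ξ : En n => gradZ F (ξ, z)) =
      fun ξ : En n => dualZ n m (fderiv ℝ F (ξ, z)) :=
    funext fun ξ => gradZ_eq F hFd (ξ, z)
  rw [heq]
  exact h4

lemma mixedXZ_eq (hF : ContDiff ℝ 2 F) (q : En n × En m) :
    mixedXZ F q = (dualX n m).comp ((fderiv ℝ (fderiv ℝ F) q).comp (inr ℝ (En n) (En m))) := by
  have h := hasFDerivAt_gradX_snd hF q.1 q.2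
  show fderiv ℝ (fun z => gradX F (q.1, z)) q.2 = _
  rw [h.fderiv, Prod.mk.eta]

lemma gradZ_fst_deriv_eq_adjoint (hF : ContDiff ℝ 2 F) (q : En n × En m) :
    (dualZ n m).comp ((fderiv ℝ (fderiv ℝ F) q).comp (inl ℝ (En n) (En m))) =
      ContinuousLinearMap.adjoint (mixedXZ F q) := by
  have hFd := hF.differentiable (by norm_num)
  have hΦ := diff_fderiv hF
  have hsymm : ∀ v w, fderiv ℝ (fderiv ℝ F) q v w = fderiv ℝ (fderiv ℝ F) q w v :=
    second_derivative_symmetric (fun y => (hFd y).hasFDerivAt) (hΦ q).hasFDerivAt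
  apply ContinuousLinearMap.ext
  intro v
  apply ext_inner_right ℝ
  intro w
  rw [ContinuousLinearMap.adjoint_inner_left]
  have hL : ⟪((dualZ n m).comp ((fderiv ℝ (fderiv ℝ F) q).comp (inl ℝ (En n) (En m)))) v, w⟫
      = fderiv ℝ (fderiv ℝ F) q (v, 0) (0, w) := by
    rw [ContinuousLinearMap.comp_apply, ContinuousLinearMap.comp_apply, inner_dualZ]
    rfl
  have hR : ⟪(v : En n), mixedXZ F q w⟫ = fderiv ℝ (fderiv ℝ F) q (0, w) (v, 0) := by
    rw [real_inner_comm, mixedXZ_eq hF q]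
    rw [ContinuousLinearMap.comp_apply, ContinuousLinearMap.comp_apply, inner_dualX]
    rfl
  rw [hL, hR, hsymm]

end Plumbing

section KeyIneq

open ContinuousLinearMap InnerProductSpace RealInnerProductSpace

variable {F : En n × En m → ℝ}

lemma hasGradientAt_sliceX (hF : ContDiff ℝ 2 F) (x : En n) (z : En m) :
    HasGradientAt (fun x' : En n => F (x', z)) (gradX F (x, z)) x := by
  have hd : DifferentiableAt ℝ (fun x' : En n => F (x', z)) x := by
    have := (hF.differentiable (by norm_num) (x, z)).hasFDerivAt
    exact (this.comp x (hasFDerivAt_prodMk_left x z)).differentiableAt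
  exact hd.hasGradientAt

lemma hasGradientAt_sliceZ (hF : ContDiff ℝ 2 F) (x : En n) (z : En m) :
    HasGradientAt (fun z' : En m => F (x, z')) (gradZ F (x, z)) z := by
  have hd : DifferentiableAt ℝ (fun z' : En m => F (x, z')) z := by
    have := (hF.differentiable (by norm_num) (x, z)).hasFDerivAt
    exact (this.comp z (hasFDerivAt_prodMk_right x z)).differentiableAt
  exact hd.hasGradientAt

lemma hasGradientAt_sliceZ_neg (hF : ContDiff ℝ 2 F) (x : En n) (z : En m) :
    HasGradientAt (fun z' : En m => -F (x, z')) (-gradZ F (x, z)) z := by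
  have h := (hasGradientAt_sliceZ hF x z).hasFDerivAt
  have h2 : HasFDerivAt (fun z' : En m => -F (x, z'))
      (-(toDual ℝ (En m)) (gradZ F (x, z))) z := h.neg
  rw [hasGradientAt_iff_hasFDerivAt, map_neg]
  exact h2

set_option maxHeartbeats 8000000 in
/-- The key quadratic decay inequality for the saddle-point field near a saddle point. -/
lemma key_ineq (F : En n × En m → ℝ) (hF : ContDiff ℝ 2 F)
    (hlip : LocallyLipschitz (mixedXZ F)) (p : En n × En m)
    (hp : IsSaddlePoint F p) (hqc : LocallyJointlyStronglyQcQcAt F p) :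
    ∃ c > (0:ℝ), ∃ r > (0:ℝ), ∀ q : En n × En m, dist q p < r →
      c * (‖q.1 - p.1‖ ^ 2 + ‖q.2 - p.2‖ ^ 2) ≤
        ⟪gradX F q, q.1 - p.1⟫ - ⟪gradZ F q, q.2 - p.2⟫ := by
  obtain ⟨s, hs, U, hUopen, hpU, hU⟩ := hqc
  obtain ⟨U₁, W₁, hU₁, hW₁, hp1, hp2, hsad⟩ := hp
  obtain ⟨K, t, htnb, hK⟩ := hlip p
  obtain ⟨ε₀, hε₀, hball₀⟩ := Metric.isOpen_iff.mp hUopen p hpU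
  obtain ⟨ε₁, hε₁, hball₁⟩ := Metric.isOpen_iff.mp (hU₁.prod hW₁) p ⟨hp1, hp2⟩
  obtain ⟨ε₂, hε₂, hball₂⟩ := Metric.nhds_basis_ball.mem_iff.mp htnb
  set r : ℝ := min (min ε₀ (min ε₁ ε₂)) (s / (6 * (K + 1))) with hrdef
  have hKpos : (0:ℝ) < 6 * ((K:ℝ) + 1) := by positivity
  have hr : 0 < r := by
    apply lt_min (lt_min hε₀ (lt_min hε₁ hε₂))
    positivity
  refine ⟨s / 2, by positivity, r, hr, ?_⟩
  rintro ⟨x, z⟩ hqr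
  show s / 2 * (‖x - p.1‖ ^ 2 + ‖z - p.2‖ ^ 2) ≤
    ⟪gradX F (x, z), x - p.1⟫ - ⟪gradZ F (x, z), z - p.2⟫
  set δx : En n := x - p.1 with hδx
  set δz : En m := z - p.2 with hδz
  set a : ℝ := ‖δx‖ with ha
  set b : ℝ := ‖δz‖ with hb
  set d : ℝ := max a b with hd
  have hdax : dist x p.1 = a := dist_eq_norm _ _
  have hdbz : dist z p.2 = b := dist_eq_norm _ _
  have hdist : dist ((x, z) : En n × En m) p = d := by
    rw [Prod.dist_eq, hdax, hdbz]
  have hdr : d < r := by rwa [hdist] at hqr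
  have hd0 : 0 ≤ d := le_trans (norm_nonneg _) (le_max_left _ _)
  have hax : a ≤ d := le_max_left _ _
  have hbz : b ≤ d := le_max_right _ _
  -- membership helper
  have hmem : ∀ x' : En n, ∀ z' : En m, dist x' p.1 ≤ d → dist z' p.2 ≤ d →
      ((x', z') : En n × En m) ∈ ball p r := by
    intro x' z' h1 h2
    rw [Metric.mem_ball, Prod.dist_eq]
    exact lt_of_le_of_lt (max_le h1 h2) hdr
  have hballU : ball p r ⊆ U := fun y hy => hball₀ (ball_subset_ball (le_trans (min_le_left _ _) (min_le_left _ _)) hy)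
  have hballUW : ball p r ⊆ U₁ ×ˢ W₁ := fun y hy => hball₁ (ball_subset_ball (le_trans (min_le_left _ _) (le_trans (min_le_right _ _) (min_le_left _ _))) hy)
  have hballt : ball p r ⊆ t := fun y hy => hball₂ (ball_subset_ball (le_trans (min_le_left _ _) (le_trans (min_le_right _ _) (min_le_right _ _))) hy)
  have hq_mem : ((x, z) : En n × En m) ∈ ball p r := hmem x z (le_of_eq hdax |>.trans hax) (le_of_eq hdbz |>.trans hbz)
  have hxp2_mem : ((x, p.2) : En n × En m) ∈ ball p r := hmem x p.2 (le_of_eq hdax |>.trans hax) (by simp [hd0])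
  have hp1z_mem : ((p.1, z) : En n × En m) ∈ ball p r := hmem p.1 z (by simp [hd0]) (le_of_eq hdbz |>.trans hbz)
  have hp_mem : p ∈ ball p r := mem_ball_self hr
  -- (E1)
  have E1 : s * a ^ 2 ≤ ⟪gradX F (x, p.2), δx⟫ := by
    have hsqc := (hU (x, p.2) (hballU hxp2_mem)).1
    have hx1 : x ∈ {x' : En n | (x', (x, p.2).2) ∈ U} := hballU hxp2_mem
    have hy1 : p.1 ∈ {x' : En n | (x', (x, p.2).2) ∈ U} := by
      show ((p.1, p.2) : En n × En m) ∈ U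
      rw [Prod.mk.eta]; exact hpU
    have hfy : F (p.1, (x, p.2).2) ≤ F (x, (x, p.2).2) := by
      show F (p.1, p.2) ≤ F (x, p.2)
      rw [Prod.mk.eta]
      exact (hsad x (hballUW hxp2_mem).1 p.2 hp2).2
    have hg := hasGradientAt_sliceX hF x p.2
    have := sqc_gradient hsqc hx1 hy1 hfy hg
    simpa [ha, hδx] using this
  -- (E2)
  have E2 : s * b ^ 2 ≤ ⟪-gradZ F (p.1, z), δz⟫ := by
    have hsqc := (hU (p.1, z) (hballU hp1z_mem)).2
    have hx1 : z ∈ {z' : En m | ((p.1, z).1, z') ∈ U} := hballU hp1z_mem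
    have hy1 : p.2 ∈ {z' : En m | ((p.1, z).1, z') ∈ U} := by
      show ((p.1, p.2) : En n × En m) ∈ U
      rw [Prod.mk.eta]; exact hpU
    have hfy : -F ((p.1, z).1, p.2) ≤ -F ((p.1, z).1, z) := by
      show -F (p.1, p.2) ≤ -F (p.1, z)
      rw [Prod.mk.eta]
      exact neg_le_neg (hsad p.1 hp1 z (hballUW hp1z_mem).2).1
    have hg := hasGradientAt_sliceZ_neg hF p.1 z
    have := sqc_gradient hsqc hx1 hy1 hfy hg
    simpa [hb, hδz] using this
  -- abbreviations
  set M₁ : En m →L[ℝ] En n := mixedXZ F (x, p.2) with hM₁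
  set M₂ : En m →L[ℝ] En n := mixedXZ F (p.1, z) with hM₂
  have ha0 : 0 ≤ a := norm_nonneg _
  have hb0 : 0 ≤ b := norm_nonneg _
  have hK0 : (0:ℝ) ≤ K := K.coe_nonneg
  -- (E3) mean value in the z variable
  have segz : ∀ ζ ∈ segment ℝ p.2 z, dist ζ p.2 ≤ b := by
    intro ζ hζ
    have : ζ ∈ closedBall p.2 b := by
      refine (convex_closedBall p.2 b).segment_subset ?_ ?_ hζ
      · exact mem_closedBall_self hb0
      · rw [mem_closedBall, hdbz]
    rwa [mem_closedBall] at this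
  have E3 : ‖gradX F (x, z) - gradX F (x, p.2) - M₁ δz‖ ≤ (K * b) * b := by
    have hderiv : ∀ ζ ∈ segment ℝ p.2 z, HasFDerivWithinAt (fun ζ' : En m => gradX F (x, ζ'))
        (mixedXZ F (x, ζ)) (segment ℝ p.2 z) ζ := by
      intro ζ hζ
      have h := hasFDerivAt_gradX_snd hF x ζ
      rw [← mixedXZ_eq hF (x, ζ)] at h
      exact h.hasFDerivWithinAt
    have hbound : ∀ ζ ∈ segment ℝ p.2 z, ‖mixedXZ F (x, ζ) - M₁‖ ≤ K * b := by
      intro ζ hζ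
      have h1 : ((x, ζ) : En n × En m) ∈ t :=
        hballt (hmem x ζ (hdax.le.trans hax) ((segz ζ hζ).trans hbz))
      have h2 : ((x, p.2) : En n × En m) ∈ t := hballt hxp2_mem
      have h3 := hK.dist_le_mul (x, ζ) h1 (x, p.2) h2
      rw [dist_eq_norm] at h3
      refine h3.trans ?_
      have h4 : dist ((x, ζ) : En n × En m) (x, p.2) ≤ b := by
        rw [Prod.dist_eq]
        exact max_le (by simpa using hb0) (segz ζ hζ)
      exact mul_le_mul_of_nonneg_left h4 hK0
    have hmv := Convex.norm_image_sub_le_of_norm_hasFDerivWithin_le' hderiv hbound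
      (convex_segment _ _) (left_mem_segment ℝ p.2 z) (right_mem_segment ℝ p.2 z)
    simpa [hδz, hb] using hmv
  -- (E4) mean value in the x variable
  have segx : ∀ ξ ∈ segment ℝ p.1 x, dist ξ p.1 ≤ a := by
    intro ξ hξ
    have : ξ ∈ closedBall p.1 a := by
      refine (convex_closedBall p.1 a).segment_subset ?_ ?_ hξ
      · exact mem_closedBall_self ha0
      · rw [mem_closedBall, hdax]
    rwa [mem_closedBall] at this
  have E4 : ‖gradZ F (x, z) - gradZ F (p.1, z) -
      ContinuousLinearMap.adjoint M₂ δx‖ ≤ (K * a) * a := by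
    have hderiv : ∀ ξ ∈ segment ℝ p.1 x, HasFDerivWithinAt (fun ξ' : En n => gradZ F (ξ', z))
        (ContinuousLinearMap.adjoint (mixedXZ F (ξ, z))) (segment ℝ p.1 x) ξ := by
      intro ξ hξ
      have h := hasFDerivAt_gradZ_fst hF ξ z
      rw [gradZ_fst_deriv_eq_adjoint hF (ξ, z)] at h
      exact h.hasFDerivWithinAt
    have hbound : ∀ ξ ∈ segment ℝ p.1 x,
        ‖ContinuousLinearMap.adjoint (mixedXZ F (ξ, z)) - ContinuousLinearMap.adjoint M₂‖
          ≤ K * a := by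
      intro ξ hξ
      have h1 : ((ξ, z) : En n × En m) ∈ t :=
        hballt (hmem ξ z ((segx ξ hξ).trans hax) (hdbz.le.trans hbz))
      have h2 : ((p.1, z) : En n × En m) ∈ t := hballt hp1z_mem
      have h3 := hK.dist_le_mul (ξ, z) h1 (p.1, z) h2
      rw [dist_eq_norm] at h3
      have heqa : ContinuousLinearMap.adjoint (mixedXZ F (ξ, z)) -
          ContinuousLinearMap.adjoint M₂ =
          ContinuousLinearMap.adjoint (mixedXZ F (ξ, z) - M₂) :=
        (map_sub (ContinuousLinearMap.adjoint (𝕜 := ℝ) (E := En m) (F := En n)) _ _).symm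
      rw [heqa, LinearIsometryEquiv.norm_map]
      refine h3.trans ?_
      have h4 : dist ((ξ, z) : En n × En m) (p.1, z) ≤ a := by
        rw [Prod.dist_eq]
        exact max_le (segx ξ hξ) (by simpa using ha0)
      exact mul_le_mul_of_nonneg_left h4 hK0
    have hmv := Convex.norm_image_sub_le_of_norm_hasFDerivWithin_le' hderiv hbound
      (convex_segment _ _) (left_mem_segment ℝ p.1 x) (right_mem_segment ℝ p.1 x)
    simpa [hδx, ha] using hmv
  -- pairing identity for the adjoint
  have cross_eq : ⟪ContinuousLinearMap.adjoint M₂ δx, δz⟫ = ⟪M₂ δz, δx⟫ := by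
    rw [ContinuousLinearMap.adjoint_inner_left]
    exact real_inner_comm _ _
  -- Lipschitz bound between the two mixed derivatives
  have crossB : ‖M₁ - M₂‖ ≤ K * d := by
    have h3 := hK.dist_le_mul (x, p.2) (hballt hxp2_mem) (p.1, z) (hballt hp1z_mem)
    rw [dist_eq_norm] at h3
    refine h3.trans ?_
    have h4 : dist ((x, p.2) : En n × En m) (p.1, z) ≤ d := by
      rw [Prod.dist_eq]
      refine max_le (hdax.le.trans hax) ?_
      rw [dist_comm]
      exact hdbz.le.trans hbz
    exact mul_le_mul_of_nonneg_left h4 hK0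
  -- splitting identities
  have hsplit1 : ⟪gradX F (x, z), δx⟫ = ⟪gradX F (x, p.2), δx⟫ + ⟪M₁ δz, δx⟫ +
      ⟪gradX F (x, z) - gradX F (x, p.2) - M₁ δz, δx⟫ := by
    rw [← inner_add_left, ← inner_add_left]
    congr 1
    abel
  have hsplit2 : ⟪gradZ F (x, z), δz⟫ = ⟪gradZ F (p.1, z), δz⟫ +
      ⟪ContinuousLinearMap.adjoint M₂ δx, δz⟫ +
      ⟪gradZ F (x, z) - gradZ F (p.1, z) - ContinuousLinearMap.adjoint M₂ δx, δz⟫ := by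
    rw [← inner_add_left, ← inner_add_left]
    congr 1
    abel
  -- scalar bounds
  have hE3' : -(((K:ℝ) * b) * b * a) ≤ ⟪gradX F (x, z) - gradX F (x, p.2) - M₁ δz, δx⟫ := by
    have h1 := abs_real_inner_le_norm (gradX F (x, z) - gradX F (x, p.2) - M₁ δz) δx
    have h2 : ‖gradX F (x, z) - gradX F (x, p.2) - M₁ δz‖ * ‖δx‖ ≤ ((K:ℝ) * b) * b * a :=
      mul_le_mul E3 le_rfl ha0 (by positivity)
    have h3 := neg_abs_le ⟪gradX F (x, z) - gradX F (x, p.2) - M₁ δz, δx⟫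
    rw [← ha] at h2
    linarith [abs_nonneg ⟪gradX F (x, z) - gradX F (x, p.2) - M₁ δz, δx⟫]
  have hE4' : ⟪gradZ F (x, z) - gradZ F (p.1, z) - ContinuousLinearMap.adjoint M₂ δx, δz⟫
      ≤ ((K:ℝ) * a) * a * b := by
    have h1 := abs_real_inner_le_norm
      (gradZ F (x, z) - gradZ F (p.1, z) - ContinuousLinearMap.adjoint M₂ δx) δz
    have h2 : ‖gradZ F (x, z) - gradZ F (p.1, z) - ContinuousLinearMap.adjoint M₂ δx‖ * ‖δz‖
        ≤ ((K:ℝ) * a) * a * b := mul_le_mul E4 le_rfl hb0 (by positivity)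
    rw [← hb] at h2
    have h3 := le_abs_self ⟪gradZ F (x, z) - gradZ F (p.1, z) -
      ContinuousLinearMap.adjoint M₂ δx, δz⟫
    linarith
  have hcross : -(((K:ℝ) * d) * b * a) ≤ ⟪M₁ δz, δx⟫ - ⟪M₂ δz, δx⟫ := by
    have he : ⟪M₁ δz, δx⟫ - ⟪M₂ δz, δx⟫ = ⟪(M₁ - M₂) δz, δx⟫ := by
      rw [ContinuousLinearMap.sub_apply, inner_sub_left]
    rw [he]
    have h1 := abs_real_inner_le_norm ((M₁ - M₂) δz) δx
    have h2 : ‖(M₁ - M₂) δz‖ ≤ ‖M₁ - M₂‖ * ‖δz‖ := ContinuousLinearMap.le_opNorm _ _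
    have h3 : ‖(M₁ - M₂) δz‖ * ‖δx‖ ≤ ((K:ℝ) * d) * b * a := by
      calc ‖(M₁ - M₂) δz‖ * ‖δx‖ ≤ (‖M₁ - M₂‖ * b) * a :=
            mul_le_mul_of_nonneg_right h2 ha0
        _ ≤ ((K:ℝ) * d) * b * a := by
            have h5 := mul_le_mul_of_nonneg_right (mul_le_mul_of_nonneg_right crossB hb0) ha0
            linarith
    have h4 := neg_abs_le ⟪(M₁ - M₂) δz, δx⟫
    linarith
  -- error term comparison
  have hdd : d * d ≤ a ^ 2 + b ^ 2 := by
    rcases le_total a b with h | h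
    · have : d = b := max_eq_right h
      rw [this]
      nlinarith [sq_nonneg a]
    · have : d = a := max_eq_left h
      rw [this]
      nlinarith [sq_nonneg b]
  have hr2 : r ≤ s / (6 * ((K:ℝ) + 1)) := min_le_right _ _
  have herr : ((K:ℝ) * d) * b * a + ((K:ℝ) * b) * b * a + ((K:ℝ) * a) * a * b
      ≤ s / 2 * (a ^ 2 + b ^ 2) := by
    have hba : b * a ≤ d * d := mul_le_mul hbz hax ha0 hd0
    have t1 : ((K:ℝ) * d) * b * a ≤ (K:ℝ) * d * (d * d) := by
      have h := mul_le_mul_of_nonneg_left hba (mul_nonneg hK0 hd0)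
      linarith
    have t2 : ((K:ℝ) * b) * b * a ≤ (K:ℝ) * d * (d * d) := by
      have hb2 : b * (b * a) ≤ d * (d * d) :=
        mul_le_mul hbz hba (mul_nonneg hb0 ha0) hd0
      have h := mul_le_mul_of_nonneg_left hb2 hK0
      linarith
    have t3 : ((K:ℝ) * a) * a * b ≤ (K:ℝ) * d * (d * d) := by
      have hab : a * b ≤ d * d := mul_le_mul hax hbz hb0 hd0
      have ha2 : a * (a * b) ≤ d * (d * d) :=
        mul_le_mul hax hab (mul_nonneg ha0 hb0) hd0
      have h := mul_le_mul_of_nonneg_left ha2 hK0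
      linarith
    have t4 : 3 * ((K:ℝ) * d) * (d * d) ≤ 3 * ((K:ℝ) * r) * (a ^ 2 + b ^ 2) := by
      have hd2 : 0 ≤ d * d := mul_nonneg hd0 hd0
      have h5 : (K:ℝ) * d ≤ (K:ℝ) * r := mul_le_mul_of_nonneg_left hdr.le hK0
      have h6 : 0 ≤ (K:ℝ) * r := mul_nonneg hK0 hr.le
      nlinarith
    have t5 : 3 * ((K:ℝ) * r) * (a ^ 2 + b ^ 2) ≤ s / 2 * (a ^ 2 + b ^ 2) := by
      have h7 : 3 * ((K:ℝ) * r) ≤ s / 2 := by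
        have hK1 : (0:ℝ) < (K:ℝ) + 1 := by positivity
        have h8 : (K:ℝ) * r ≤ ((K:ℝ) + 1) * r := by nlinarith [hr.le]
        have h9 : ((K:ℝ) + 1) * r ≤ ((K:ℝ) + 1) * (s / (6 * ((K:ℝ) + 1))) :=
          mul_le_mul_of_nonneg_left hr2 hK1.le
        have h10 : ((K:ℝ) + 1) * (s / (6 * ((K:ℝ) + 1))) = s / 6 := by
          field_simp
        linarith
      have h10 : (0:ℝ) ≤ a ^ 2 + b ^ 2 := by positivity
      exact mul_le_mul_of_nonneg_right h7 h10
    linarith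
  -- assemble
  rw [hsplit1, hsplit2]
  have hE2' : s * b ^ 2 ≤ -⟪gradZ F (p.1, z), δz⟫ := by
    rwa [inner_neg_left] at E2
  linarith [E1, hE2', hE3', hE4', hcross, herr]

end KeyIneq

section Gronwall

/-- Continuous-induction Gronwall-type bootstrap estimate. -/
lemma gronwall_bootstrap {w u : ℝ → ℝ} (hw : ∀ t : ℝ, 0 ≤ t → HasDerivAt w (u t) t)
    {s R : ℝ} (hs : 0 < s)
    (hkey : ∀ t : ℝ, 0 ≤ t → w t < R → u t ≤ -s * w t)
    (hw0 : 0 ≤ w 0)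
    (hstart : w 0 < R) :
    ∀ t : ℝ, 0 ≤ t → w t ≤ w 0 * Real.exp (-s * t) := by
  by_contra hcon
  push_neg at hcon
  obtain ⟨tbad, htbad0, htbad⟩ := hcon
  set E : Set ℝ := {t : ℝ | 0 ≤ t ∧ w 0 * Real.exp (-s * t) < w t} with hE
  have hEne : E.Nonempty := ⟨tbad, htbad0, htbad⟩
  have hbdd : BddBelow E := ⟨0, fun t ht => ht.1⟩
  set t₀ : ℝ := sInf E with ht₀def
  have ht₀0 : 0 ≤ t₀ := le_csInf hEne (fun t ht => ht.1)
  have hcont : ∀ τ : ℝ, 0 ≤ τ → ContinuousAt w τ := fun τ hτ => (hw τ hτ).continuousAt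
  -- the bound holds on [0, t₀]
  have Hlt : ∀ τ : ℝ, 0 ≤ τ → τ < t₀ → w τ ≤ w 0 * Real.exp (-s * τ) := by
    intro τ h0 hlt
    by_contra hτ
    push_neg at hτ
    exact absurd (csInf_le hbdd ⟨h0, hτ⟩) (not_le.mpr hlt)
  have Hle : ∀ τ : ℝ, 0 ≤ τ → τ ≤ t₀ → w τ ≤ w 0 * Real.exp (-s * τ) := by
    intro τ h0 hle
    rcases lt_or_eq_of_le hle with hlt | heq
    · exact Hlt τ h0 hlt
    · rcases eq_or_lt_of_le h0 with hz | hpos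
      · rw [← hz]; simp
      · have hne : (𝓝[<] τ).NeBot := nhdsLT_neBot τ
        have htw : Tendsto w (𝓝[<] τ) (𝓝 (w τ)) :=
          ((hcont τ h0).tendsto).mono_left nhdsWithin_le_nhds
        have htb : Tendsto (fun τ' : ℝ => w 0 * Real.exp (-s * τ')) (𝓝[<] τ)
            (𝓝 (w 0 * Real.exp (-s * τ))) := by
          have : ContinuousAt (fun τ' : ℝ => w 0 * Real.exp (-s * τ')) τ := by fun_prop
          exact this.tendsto.mono_left nhdsWithin_le_nhds
        refine le_of_tendsto_of_tendsto htw htb ?_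
        filter_upwards [Ioo_mem_nhdsLT_of_mem (⟨hpos, le_rfl⟩ : τ ∈ Set.Ioc 0 τ)]
          with τ' hτ'
        exact Hlt τ' hτ'.1.le (heq ▸ hτ'.2)
  have hboundR : ∀ τ : ℝ, 0 ≤ τ → τ ≤ t₀ → w τ < R := by
    intro τ h0 hle
    refine lt_of_le_of_lt (Hle τ h0 hle) ?_
    have h1 : Real.exp (-s * τ) ≤ 1 := by
      rw [Real.exp_le_one_iff]
      nlinarith
    calc w 0 * Real.exp (-s * τ) ≤ w 0 * 1 := mul_le_mul_of_nonneg_left h1 hw0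
      _ = w 0 := mul_one _
      _ < R := hstart
  -- extend a bit past t₀
  have hwt₀R : w t₀ < R := hboundR t₀ ht₀0 le_rfl
  have hev : ∀ᶠ τ in 𝓝 t₀, w τ < R := (hcont t₀ ht₀0).tendsto.eventually_lt_const hwt₀R
  obtain ⟨h, hhpos, hh⟩ := Metric.eventually_nhds_iff.mp hev
  set T : ℝ := t₀ + h / 2 with hT
  have hTpos : 0 < T - t₀ := by simp [hT]; positivity
  have hwR : ∀ τ : ℝ, τ ∈ Set.Icc 0 T → w τ < R := by
    intro τ hτ
    rcases le_or_gt τ t₀ with hle | hgt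
    · exact hboundR τ hτ.1 hle
    · apply hh
      rw [Real.dist_eq, abs_lt]
      have hτ2 := hτ.2
      rw [hT] at hτ2
      exact ⟨by linarith, by linarith⟩
  -- the auxiliary function g is nonincreasing on [0, T]
  set g : ℝ → ℝ := fun τ => w τ * Real.exp (s * τ) with hg
  have hgderiv : ∀ τ : ℝ, 0 ≤ τ → HasDerivAt g ((u τ + s * w τ) * Real.exp (s * τ)) τ := by
    intro τ hτ
    have h1 : HasDerivAt (fun τ' : ℝ => Real.exp (s * τ')) (Real.exp (s * τ) * s) τ := by
      have h2 : HasDerivAt (fun τ' : ℝ => s * τ') s τ := by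
        simpa using (hasDerivAt_id τ).const_mul s
      exact h2.exp
    have := (hw τ hτ).mul h1
    rw [show (u τ + s * w τ) * Real.exp (s * τ) =
      u τ * Real.exp (s * τ) + w τ * (Real.exp (s * τ) * s) by ring]
    exact this
  have hanti : AntitoneOn g (Set.Icc 0 T) := by
    have hconv : Convex ℝ (Set.Icc (0:ℝ) T) := convex_Icc _ _
    have hcg : ContinuousOn g (Set.Icc 0 T) := by
      intro τ hτ
      exact ((hgderiv τ hτ.1).continuousAt).continuousWithinAt
    have hdg : ∀ τ ∈ interior (Set.Icc (0:ℝ) T), deriv g τ ≤ 0 := by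
      intro τ hτ
      rw [interior_Icc] at hτ
      rw [(hgderiv τ hτ.1.le).deriv]
      have h1 : u τ ≤ -s * w τ := hkey τ hτ.1.le (hwR τ ⟨hτ.1.le, hτ.2.le⟩)
      have h2 : (0:ℝ) < Real.exp (s * τ) := Real.exp_pos _
      nlinarith
    refine antitoneOn_of_deriv_nonpos hconv hcg ?_ hdg
    intro τ hτ
    rw [interior_Icc] at hτ
    exact ((hgderiv τ hτ.1.le).differentiableAt).differentiableWithinAt
  have hfinal : ∀ τ : ℝ, τ ∈ Set.Icc 0 T → w τ ≤ w 0 * Real.exp (-s * τ) := by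
    intro τ hτ
    have h1 : g τ ≤ g 0 := hanti (Set.left_mem_Icc.mpr (by linarith [hτ.1, hτ.2, ht₀0, hTpos]))
      hτ hτ.1
    have h2 : g 0 = w 0 := by simp [hg]
    have h3 : w τ = g τ * Real.exp (-s * τ) := by
      rw [hg]
      simp only []
      rw [mul_assoc, ← Real.exp_add]
      simp
    rw [h3]
    have h4 : (0:ℝ) ≤ Real.exp (-s * τ) := (Real.exp_pos _).le
    calc g τ * Real.exp (-s * τ) ≤ g 0 * Real.exp (-s * τ) :=
        mul_le_mul_of_nonneg_right h1 h4
      _ = w 0 * Real.exp (-s * τ) := by rw [h2]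
  -- contradiction with the infimum
  obtain ⟨t', ht'E, ht'lt⟩ := exists_lt_of_csInf_lt hEne (by linarith : sInf E < T)
  have := hfinal t' ⟨ht'E.1, ht'lt.le⟩
  exact absurd this (not_le.mpr ht'E.2)

end Gronwall

end Lemmas

open RealInnerProductSpace in
set_option maxHeartbeats 2000000 in
/-- Proposition: local asymptotic stability via strong
quasiconvexity-quasiconcavity. If `F` is `C²` with locally Lipschitz mixed second derivative
`∇ₓ_z F` and is locally jointly strongly quasiconvex-quasiconcave on its (nonempty) saddle set,
then every nonempty isolated path connected component `S` of the saddle set is locally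
asymptotically stable, with trajectories starting sufficiently close converging to a single
point of `S`. -/
theorem stmt_4 {n m : ℕ} (F : En n × En m → ℝ) (hF : ContDiff ℝ 2 F)
    (hne : (SaddleSet F).Nonempty)
    (hlip : LocallyLipschitz (mixedXZ F))
    (hqcqc : ∀ p ∈ SaddleSet F, LocallyJointlyStronglyQcQcAt F p)
    (S : Set (En n × En m)) (hSne : S.Nonempty)
    (hS : IsIsolatedPathComponent S (SaddleSet F)) :
    (∀ ε > 0, ∃ δ > 0, ∀ φ : ℝ → En n × En m, IsTrajectory F φ →
      infDist (φ 0) S < δ → ∀ t : ℝ, 0 ≤ t → infDist (φ t) S < ε) ∧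
    (∃ δ > 0, ∀ φ : ℝ → En n × En m, IsTrajectory F φ → infDist (φ 0) S < δ →
      ∃ q ∈ S, Tendsto φ atTop (𝓝 q)) := by
  classical
  obtain ⟨p, hpsad, hSp⟩ := pathConnected_saddle_singleton F hqcqc S hSne hS.1 hS.2.1
  subst hSp
  obtain ⟨c, hc, r, hr, hkey⟩ := key_ineq F hF hlip p hpsad (hqcqc p hpsad)
  -- the exponential decay estimate for trajectories starting close to p
  have main : ∀ φ : ℝ → En n × En m, IsTrajectory F φ → dist (φ 0) p < r / 2 →
      ∀ t : ℝ, 0 ≤ t →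
        ‖(φ t).1 - p.1‖ ^ 2 + ‖(φ t).2 - p.2‖ ^ 2 ≤
          (‖(φ 0).1 - p.1‖ ^ 2 + ‖(φ 0).2 - p.2‖ ^ 2) * Real.exp (-(2 * c) * t) := by
    intro φ hφ hclose
    have hD : ∀ t : ℝ, 0 ≤ t →
        HasDerivAt (fun τ => ‖(φ τ).1 - p.1‖ ^ 2 + ‖(φ τ).2 - p.2‖ ^ 2)
          (2 * ⟪(Xsp F (φ t)).1, (φ t).1 - p.1⟫ +
            2 * ⟪(Xsp F (φ t)).2, (φ t).2 - p.2⟫) t := by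
      intro t ht
      have h1 := hφ t ht
      have hx : HasDerivAt (fun τ => (φ τ).1) ((Xsp F (φ t)).1) t :=
        (ContinuousLinearMap.fst ℝ (En n) (En m)).hasFDerivAt.comp_hasDerivAt t h1
      have hz : HasDerivAt (fun τ => (φ τ).2) ((Xsp F (φ t)).2) t :=
        (ContinuousLinearMap.snd ℝ (En n) (En m)).hasFDerivAt.comp_hasDerivAt t h1
      have hx' := hx.sub_const p.1
      have hz' := hz.sub_const p.2
      have hin1 := hx'.inner ℝ hx'
      have hin2 := hz'.inner ℝ hz'
      have e1 : (fun τ => (⟪(φ τ).1 - p.1, (φ τ).1 - p.1⟫ : ℝ)) =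
          fun τ => ‖(φ τ).1 - p.1‖ ^ 2 := funext fun τ => real_inner_self_eq_norm_sq _
      have e2 : (fun τ => (⟪(φ τ).2 - p.2, (φ τ).2 - p.2⟫ : ℝ)) =
          fun τ => ‖(φ τ).2 - p.2‖ ^ 2 := funext fun τ => real_inner_self_eq_norm_sq _
      rw [e1] at hin1
      rw [e2] at hin2
      have := hin1.add hin2
      have e3 : ⟪(φ t).1 - p.1, (Xsp F (φ t)).1⟫ + ⟪(Xsp F (φ t)).1, (φ t).1 - p.1⟫ +
          (⟪(φ t).2 - p.2, (Xsp F (φ t)).2⟫ + ⟪(Xsp F (φ t)).2, (φ t).2 - p.2⟫) =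
          2 * ⟪(Xsp F (φ t)).1, (φ t).1 - p.1⟫ + 2 * ⟪(Xsp F (φ t)).2, (φ t).2 - p.2⟫ := by
        rw [real_inner_comm ((φ t).1 - p.1) ((Xsp F (φ t)).1),
          real_inner_comm ((φ t).2 - p.2) ((Xsp F (φ t)).2)]
        ring
      rw [e3] at this
      exact this
    have hkey' : ∀ t : ℝ, 0 ≤ t →
        (‖(φ t).1 - p.1‖ ^ 2 + ‖(φ t).2 - p.2‖ ^ 2) < r ^ 2 →
        (2 * ⟪(Xsp F (φ t)).1, (φ t).1 - p.1⟫ +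
          2 * ⟪(Xsp F (φ t)).2, (φ t).2 - p.2⟫) ≤
          -(2 * c) * (‖(φ t).1 - p.1‖ ^ 2 + ‖(φ t).2 - p.2‖ ^ 2) := by
      intro t ht hwt
      have hda : dist (φ t).1 p.1 < r := by
        rw [dist_eq_norm]
        refine lt_of_pow_lt_pow_left₀ 2 hr.le ?_
        nlinarith [sq_nonneg ‖(φ t).2 - p.2‖]
      have hdb : dist (φ t).2 p.2 < r := by
        rw [dist_eq_norm]
        refine lt_of_pow_lt_pow_left₀ 2 hr.le ?_
        nlinarith [sq_nonneg ‖(φ t).1 - p.1‖]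
      have hdist : dist (φ t) p < r := by
        rw [Prod.dist_eq]
        exact max_lt hda hdb
      have hk := hkey (φ t) hdist
      have hXsp1 : (Xsp F (φ t)).1 = -gradX F (φ t) := rfl
      have hXsp2 : (Xsp F (φ t)).2 = gradZ F (φ t) := rfl
      rw [hXsp1, hXsp2, inner_neg_left]
      linarith
    have hw0 : 0 ≤ ‖(φ 0).1 - p.1‖ ^ 2 + ‖(φ 0).2 - p.2‖ ^ 2 := by positivity
    have hstart : ‖(φ 0).1 - p.1‖ ^ 2 + ‖(φ 0).2 - p.2‖ ^ 2 < r ^ 2 := by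
      have h1 : ‖(φ 0).1 - p.1‖ ≤ dist (φ 0) p := by
        rw [← dist_eq_norm, Prod.dist_eq]
        exact le_max_left _ _
      have h2 : ‖(φ 0).2 - p.2‖ ≤ dist (φ 0) p := by
        rw [← dist_eq_norm, Prod.dist_eq]
        exact le_max_right _ _
      have h3 : (0:ℝ) ≤ dist (φ 0) p := dist_nonneg
      have h4 : ‖(φ 0).1 - p.1‖ ^ 2 ≤ dist (φ 0) p ^ 2 :=
        pow_le_pow_left₀ (norm_nonneg _) h1 2
      have h5 : ‖(φ 0).2 - p.2‖ ^ 2 ≤ dist (φ 0) p ^ 2 :=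
        pow_le_pow_left₀ (norm_nonneg _) h2 2
      have h6 : dist (φ 0) p ^ 2 < (r / 2) ^ 2 := by
        have := pow_lt_pow_left₀ hclose h3 (n := 2) (by norm_num)
        exact this
      nlinarith [hr]
    exact gronwall_bootstrap hD (by positivity : (0:ℝ) < 2 * c) hkey' hw0 hstart
  -- distance at time t is controlled by the Lyapunov function
  have hdist_le : ∀ φ : ℝ → En n × En m, ∀ t : ℝ,
      dist (φ t) p ^ 2 ≤ ‖(φ t).1 - p.1‖ ^ 2 + ‖(φ t).2 - p.2‖ ^ 2 := by
    intro φ t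
    rw [Prod.dist_eq, dist_eq_norm, dist_eq_norm]
    rcases max_cases ‖(φ t).1 - p.1‖ ‖(φ t).2 - p.2‖ with ⟨h1, _⟩ | ⟨h1, _⟩ <;>
      rw [h1] <;> nlinarith [sq_nonneg ‖(φ t).1 - p.1‖, sq_nonneg ‖(φ t).2 - p.2‖]
  constructor
  · -- stability
    intro ε hε
    refine ⟨min (ε / 2) (r / 2), by positivity, ?_⟩
    intro φ hφ h0 t ht
    rw [infDist_singleton] at h0 ⊢
    have hst : dist (φ 0) p < r / 2 := lt_of_lt_of_le h0 (min_le_right _ _)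
    have hm := main φ hφ hst t ht
    have hexp : Real.exp (-(2 * c) * t) ≤ 1 := by
      rw [Real.exp_le_one_iff]
      nlinarith
    have hw0' : ‖(φ 0).1 - p.1‖ ^ 2 + ‖(φ 0).2 - p.2‖ ^ 2 ≤ 2 * dist (φ 0) p ^ 2 := by
      have h1 : ‖(φ 0).1 - p.1‖ ≤ dist (φ 0) p := by
        rw [← dist_eq_norm, Prod.dist_eq]; exact le_max_left _ _
      have h2 : ‖(φ 0).2 - p.2‖ ≤ dist (φ 0) p := by
        rw [← dist_eq_norm, Prod.dist_eq]; exact le_max_right _ _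
      nlinarith [norm_nonneg ((φ 0).1 - p.1), norm_nonneg ((φ 0).2 - p.2)]
    have hde : dist (φ 0) p < ε / 2 := lt_of_lt_of_le h0 (min_le_left _ _)
    have hfin : dist (φ t) p ^ 2 < ε ^ 2 := by
      have h4 := hdist_le φ t
      have h5 : (0:ℝ) ≤ ‖(φ 0).1 - p.1‖ ^ 2 + ‖(φ 0).2 - p.2‖ ^ 2 := by positivity
      have h6 : (‖(φ 0).1 - p.1‖ ^ 2 + ‖(φ 0).2 - p.2‖ ^ 2) * Real.exp (-(2 * c) * t)
          ≤ ‖(φ 0).1 - p.1‖ ^ 2 + ‖(φ 0).2 - p.2‖ ^ 2 :=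
        mul_le_of_le_one_right h5 hexp
      nlinarith [dist_nonneg (x := φ 0) (y := p), hε]
    exact lt_of_pow_lt_pow_left₀ 2 hε.le hfin
  · -- convergence
    refine ⟨r / 2, by positivity, ?_⟩
    intro φ hφ h0
    rw [infDist_singleton] at h0
    refine ⟨p, rfl, ?_⟩
    rw [tendsto_iff_dist_tendsto_zero]
    set W0 : ℝ := ‖(φ 0).1 - p.1‖ ^ 2 + ‖(φ 0).2 - p.2‖ ^ 2 with hW0
    have hW0nn : 0 ≤ W0 := by positivity
    have hub : ∀ t : ℝ, 0 ≤ t → dist (φ t) p ≤ Real.sqrt (W0 * Real.exp (-(2 * c) * t)) := by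
      intro t ht
      rw [Real.le_sqrt dist_nonneg (by positivity)]
      exact le_trans (hdist_le φ t) (main φ hφ h0 t ht)
    have hlim : Tendsto (fun t : ℝ => Real.sqrt (W0 * Real.exp (-(2 * c) * t))) atTop
        (𝓝 0) := by
      have h1 : Tendsto (fun t : ℝ => -(2 * c) * t) atTop atBot :=
        (tendsto_const_mul_atBot_of_neg (by linarith)).mpr tendsto_id
      have h2 : Tendsto (fun t : ℝ => Real.exp (-(2 * c) * t)) atTop (𝓝 0) :=
        Real.tendsto_exp_atBot.comp h1
      have h3 : Tendsto (fun t : ℝ => W0 * Real.exp (-(2 * c) * t)) atTop (𝓝 0) := by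
        have := h2.const_mul W0
        simpa using this
      have h4 : ContinuousAt Real.sqrt 0 := Real.continuous_sqrt.continuousAt
      have := h4.tendsto.comp h3
      simpa [Real.sqrt_zero, Function.comp_def] using this
    refine tendsto_of_tendsto_of_tendsto_of_le_of_le' tendsto_const_nhds hlim ?_ ?_
    · exact Filter.Eventually.of_forall (fun t => dist_nonneg)
    · filter_upwards [eventually_ge_atTop (0:ℝ)] with t ht
      exact hub t ht
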